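/- Let p = 2 and let ι ∈ H_0(QS^0; F_2) be the class of the non-basepoint. In QH_*(Q_0 S^0; F_2), the image of the map induced on indecomposables by the S^1-transfer ∂: Σ CP^∞_+ → QS^0 contains every class Q^{2s+1}ι for s ≥ 0. Explicitly, using the Adem relation Q^{2s}Q^1 = Q^{s+1}Q^s, one has Q(∂_*)(a_{2s+1} - Q^{2s}a_1) = Q^{2s+1}ι, where Q(∂_*)(a_s) = Q^{2s+1}ι + Q^{s+1}Q^sι. -/

import Mathlib

/-!
STATEMENT 10: (p = 2) The image of the map induced on indecomposables by the
`S¹`-transfer `∂ : ΣCP^∞_+ → QS⁰` contains every class `Q^{2s+1}ι`; explicitly, with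
`Q(∂_*)(a_{2s+1}) = Q^{2s+1}ι + Q^{s+1}Q^sι` and the Adem relation
`Q^{2s}Q^1 = Q^{s+1}Q^s`, one has `Q(∂_*)(a_{2s+1} - Q^{2s}a_1) = Q^{2s+1}ι`.

`QH_*(QS⁰)` is the free `Q`-unstable module `D'F₂` on a degree-zero generator `ι` over
the mod 2 Dyer–Lashof algebra `R`, and `QH_*(QΣCP^∞_+)` is the free `Q`-unstable
`R`-module on generators `a_{2s+1}` of degree `2s+1`, `s ≥ 0`.
-/

open scoped DirectSum

noncomputable section

abbrev F2 := ZMod 2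
abbrev FreeDL := FreeAlgebra F2 ℕ
def q (s : ℕ) : FreeDL := FreeAlgebra.ι F2 s

def Hcomp (n : ℕ) : Submodule F2 FreeDL :=
  Submodule.span F2 {w | ∃ L : List ℕ, L.sum = n ∧ w = (L.map q).prod}

def ademCoeff (r s i : ℕ) : F2 :=
  if r ≤ 2 * i ∧ s + i + 1 ≤ r then ((i - s - 1).choose (2 * i - r) : F2) else 0

def ademSet : Set FreeDL :=
  {x | ∃ r s : ℕ, 2 * s < r ∧
    x = q r * q s + ∑ i ∈ Finset.range (r + s + 1), ademCoeff r s i • (q (r + s - i) * q i)}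

def unstableSet : Set FreeDL :=
  {x | ∃ (s n : ℕ) (w : FreeDL), s < n ∧ w ∈ Hcomp n ∧ x = q s * w}

def dlRel : FreeDL → FreeDL → Prop := fun x y => (x ∈ ademSet ∪ unstableSet) ∧ y = 0

/-- The mod 2 Dyer–Lashof algebra `R`. -/
abbrev DL2 := RingQuot dlRel
instance : Ring DL2 := RingQuot.instRing dlRel
def dlMk : FreeDL →ₐ[F2] DL2 := RingQuot.mkAlgHom F2 dlRel

/-- The free `Q`-unstable `R`-module `D'(F₂·a)` on one generator `a` of degree `d`:
the quotient of `R` by the (left) span of the elements `Q^t·(w·a)` with `w` homogeneous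
of degree `m` and `2t ≤ 2(m + d)`, i.e. `t ≤ m + deg a`. -/
abbrev Dmod (d : ℕ) : Type :=
  DL2 ⧸ Submodule.span DL2
    {y : DL2 | ∃ (t m : ℕ) (w : FreeDL), w ∈ Hcomp m ∧ t ≤ m + d ∧ y = dlMk (q t * w)}

/-- `QH_*(QS⁰; F₂) = D'F₂`, on the degree-zero generator `ι`. -/
abbrev NQS : Type := Dmod 0

def mkN : DL2 → NQS := Submodule.Quotient.mk

/-- `QH_*(QΣCP^∞_+; F₂)`: free `Q`-unstable `R`-module on generators `a_{2s+1}`. -/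
abbrev MCP : Type := ⨁ s : ℕ, Dmod (2 * s + 1)

/-- The generator `a_{2s+1}`. -/
def aGen (s : ℕ) : MCP :=
  DirectSum.of (fun s => Dmod (2 * s + 1)) s (Submodule.Quotient.mk 1)


lemma q_mem_Hcomp (n : ℕ) : q n ∈ Hcomp n :=
  Submodule.subset_span ⟨[n], by simp, by simp⟩

lemma unstable_zero {s n : ℕ} {w : FreeDL} (h : s < n) (hw : w ∈ Hcomp n) :
    dlMk (q s * w) = 0 := by
  have hrel : dlRel (q s * w) 0 := ⟨Or.inr ⟨s, n, w, h, hw, rfl⟩, rfl⟩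
  calc dlMk (q s * w) = dlMk 0 := RingQuot.mkAlgHom_rel F2 hrel
    _ = 0 := map_zero _

lemma neg_eq_self_DL2 (y : DL2) : -y = y := by
  rw [← neg_one_smul F2 y, show (-1 : F2) = 1 from by decide, one_smul]

lemma adem_zero {r s : ℕ} (h : 2 * s < r) :
    dlMk (q r * q s + ∑ i ∈ Finset.range (r + s + 1), ademCoeff r s i • (q (r + s - i) * q i)) = 0 := by
  have hrel : dlRel (q r * q s + ∑ i ∈ Finset.range (r + s + 1),
      ademCoeff r s i • (q (r + s - i) * q i)) 0 := ⟨Or.inl ⟨r, s, h, rfl⟩, rfl⟩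
  calc dlMk _ = dlMk 0 := RingQuot.mkAlgHom_rel F2 hrel
    _ = 0 := map_zero _

lemma q1q0_zero : dlMk (q 1 * q 0) = 0 := by
  have h := adem_zero (r := 1) (s := 0) (by norm_num)
  have hsum : ∑ i ∈ Finset.range (1 + 0 + 1), ademCoeff 1 0 i • (q (1 + 0 - i) * q i) = 0 := by
    apply Finset.sum_eq_zero
    intro i hi
    have : ademCoeff 1 0 i = 0 := by
      simp only [Finset.mem_range] at hi
      unfold ademCoeff
      rw [if_neg]
      omega
    rw [this, zero_smul]
  rw [hsum, add_zero] at h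
  exact h

lemma adem_main (s : ℕ) : dlMk (q (2 * s) * q 1) = dlMk (q (s + 1) * q s) := by
  match s with
  | 0 =>
    have h1 : dlMk (q (2 * 0) * q 1) = 0 := unstable_zero (by norm_num) (q_mem_Hcomp 1)
    rw [h1, show (0:ℕ)+1 = 1 from rfl]
    exact q1q0_zero.symm
  | 1 => rfl
  | (t + 2) =>
    set s := t + 2 with hs
    have h := adem_zero (r := 2 * s) (s := 1) (by omega)
    rw [map_add, map_sum] at h
    have hsum : ∑ i ∈ Finset.range (2 * s + 1 + 1), dlMk (ademCoeff (2 * s) 1 i • (q (2 * s + 1 - i) * q i))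
        = dlMk (q (s + 1) * q s) := by
      rw [Finset.sum_eq_single_of_mem s (by simp [Finset.mem_range]; omega)]
      · have hc : ademCoeff (2 * s) 1 s = 1 := by
          unfold ademCoeff
          rw [if_pos (by omega)]
          have : 2 * s - 2 * s = 0 := by omega
          rw [this, Nat.choose_zero_right]
          norm_num
        rw [hc, one_smul]
        have h2 : 2 * s + 1 - s = s + 1 := by omega
        rw [h2]
      · intro i hi hne
        simp only [Finset.mem_range] at hi
        rcases lt_or_gt_of_ne hne with hlt | hgt
        · have hc : ademCoeff (2 * s) 1 i = 0 := by
            unfold ademCoeff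
            rw [if_neg]
            omega
          rw [hc, zero_smul, map_zero]
        · rw [map_smul]
          have : dlMk (q (2 * s + 1 - i) * q i) = 0 :=
            unstable_zero (by omega) (q_mem_Hcomp i)
          rw [this, smul_zero]
    rw [hsum] at h
    have := eq_neg_of_add_eq_zero_left h
    rw [neg_eq_self_DL2] at this
    exact this

lemma smul_mkN (c y : DL2) : c • mkN y = mkN (c * y) := by
  show c • Submodule.Quotient.mk y = Submodule.Quotient.mk (c * y)
  rw [← Submodule.Quotient.mk_smul, smul_eq_mul]

lemma sub_mkN (a b : DL2) : mkN a - mkN b = mkN (a - b) := by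
  show Submodule.Quotient.mk a - Submodule.Quotient.mk b = Submodule.Quotient.mk (a - b)
  rw [Submodule.Quotient.mk_sub]

theorem transfer_image_contains_odd_classes
    (f : MCP →ₗ[DL2] NQS)
    (hf : ∀ s : ℕ, f (aGen s) = mkN (dlMk (q (2 * s + 1) + q (s + 1) * q s))) :
    -- the Adem relation `Q^{2s}Q^1 = Q^{s+1}Q^s` in `R`
    (∀ s : ℕ, dlMk (q (2 * s) * q 1) = dlMk (q (s + 1) * q s)) ∧
    -- the explicit formula `Q(∂_*)(a_{2s+1} - Q^{2s}a_1) = Q^{2s+1}ι`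
    (∀ s : ℕ, f (aGen s - dlMk (q (2 * s)) • aGen 0) = mkN (dlMk (q (2 * s + 1)))) ∧
    -- hence every `Q^{2s+1}ι` lies in the image of `Q(∂_*)`
    (∀ s : ℕ, mkN (dlMk (q (2 * s + 1))) ∈ LinearMap.range f) := by
  have key : ∀ s : ℕ, f (aGen s - dlMk (q (2 * s)) • aGen 0) = mkN (dlMk (q (2 * s + 1))) := by
    intro s
    rw [map_sub, map_smul, hf s, hf 0]
    have h0 : dlMk (q (2 * 0 + 1) + q (0 + 1) * q 0) = dlMk (q 1) := by
      rw [map_add, show (2 * 0 + 1 : ℕ) = 1 from rfl,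
        q1q0_zero, add_zero]
    rw [h0, smul_mkN, ← map_mul, adem_main s, map_add, sub_mkN, add_sub_cancel_right]
  refine ⟨adem_main, key, fun s => ⟨_, key s⟩⟩

end
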